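/- For every integer n ≥ 2, let G_k : Matrix (Fin n) (Fin n) ℝ (for k = 0, 1, …, n−2) be the Givens rotation matrix that agrees with the identity matrix outside rows and columns k and k+1 and, on the standard basis vectors, acts by G_k e_k = c_k e_k + s_k e_{k+1} and G_k e_{k+1} = −s_k e_k + c_k e_{k+1}, where c_k = 1/√(n−k) and s_k = √((n−k−1)/(n−k)). Then the product G_{n−2} · G_{n−3} ⋯ G_1 · G_0 applied to the first standard basis vector e_0 equals the uniform vector (1/√n) Σ_{j=0}^{n−1} e_j. -/

import Mathlib

open Matrix

/-- Correctness of the cascade of `n-1` Givens rotations preparing the uniform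
(`W_n`) vector from the first standard basis vector, in the one-excitation sector. -/
theorem givens_cascade_prepares_uniform (n : ℕ) (hn : 2 ≤ n)
    (G : ℕ → Matrix (Fin n) (Fin n) ℝ)
    (hG : ∀ k, k ≤ n - 2 → ∀ i j : Fin n,
      G k i j =
        if (i : ℕ) = k ∧ (j : ℕ) = k then 1 / Real.sqrt ((n : ℝ) - k)
        else if (i : ℕ) = k + 1 ∧ (j : ℕ) = k then
          Real.sqrt (((n : ℝ) - k - 1) / ((n : ℝ) - k))
        else if (i : ℕ) = k ∧ (j : ℕ) = k + 1 then
          -Real.sqrt (((n : ℝ) - k - 1) / ((n : ℝ) - k))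
        else if (i : ℕ) = k + 1 ∧ (j : ℕ) = k + 1 then 1 / Real.sqrt ((n : ℝ) - k)
        else if i = j then 1 else 0) :
    (((List.range (n - 1)).reverse.map G).prod) *ᵥ (Pi.single (⟨0, by omega⟩ : Fin n) (1 : ℝ)) =
      fun _ => 1 / Real.sqrt n := by
  have hn0 : (0 : ℝ) < n := by positivity
  have key : ∀ m : ℕ, m ≤ n - 1 →
      (((List.range m).reverse.map G).prod) *ᵥ (Pi.single (⟨0, by omega⟩ : Fin n) (1 : ℝ)) =
      fun j : Fin n => if (j : ℕ) < m then 1 / Real.sqrt n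
        else if (j : ℕ) = m then Real.sqrt (((n : ℝ) - m) / n) else 0 := by
    intro m hm
    induction m with
    | zero =>
      simp only [List.range_zero, List.reverse_nil, List.map_nil, List.prod_nil, one_mulVec]
      funext j
      simp only [Nat.cast_zero, sub_zero, Nat.not_lt_zero, if_false]
      rw [div_self (ne_of_gt hn0), Real.sqrt_one]
      rw [Pi.single_apply]
      by_cases h : (j : ℕ) = 0
      · have : j = (⟨0, by omega⟩ : Fin n) := Fin.ext h
        simp [this, h]
      · have : j ≠ (⟨0, by omega⟩ : Fin n) := by
          intro hc; exact h (by rw [hc])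
        simp [this, h]
    | succ m ih =>
      have hm' : m ≤ n - 1 := by omega
      have hmn : m + 1 ≤ n - 1 := hm
      have hk : m ≤ n - 2 := by omega
      have hIH := ih hm'
      rw [List.range_succ, List.reverse_append, List.reverse_singleton,
        List.singleton_append, List.map_cons, List.prod_cons]
      rw [← Matrix.mulVec_mulVec]
      rw [hIH]
      set a : ℝ := (n : ℝ) - m with ha
      have ha2 : (2 : ℝ) ≤ a := by
        have : (m : ℝ) + 2 ≤ (n : ℝ) := by exact_mod_cast (by omega : m + 2 ≤ n)
        linarith
      have ha0 : (0 : ℝ) < a := by linarith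
      have hsa : Real.sqrt a ≠ 0 := by positivity
      -- the two special indices
      have hmlt : m < n := by omega
      have hm1lt : m + 1 < n := by omega
      set jm : Fin n := ⟨m, hmlt⟩ with hjm
      set jm1 : Fin n := ⟨m + 1, hm1lt⟩ with hjm1
      funext i
      rw [Matrix.mulVec]
      show (Finset.univ.sum fun j => G m i j *
        (if (j : ℕ) < m then 1 / Real.sqrt n
          else if (j : ℕ) = m then Real.sqrt (((n : ℝ) - m) / n) else 0)) = _
      have hGm := hG m hk
      rcases lt_trichotomy (i : ℕ) m with hi | hi | hi
      · -- i < m : identity row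
        rw [Finset.sum_eq_single i]
        · rw [hGm]
          have h1 : ¬((i : ℕ) = m) := by omega
          have h2 : ¬((i : ℕ) = m + 1) := by omega
          simp only [h1, h2, false_and, if_false, if_pos rfl, hi, if_pos, one_mul]
          have : (i : ℕ) < m + 1 := by omega
          simp [this, hi]
        · intro j _ hj
          rw [hGm]
          have h1 : ¬((i : ℕ) = m) := by omega
          have h2 : ¬((i : ℕ) = m + 1) := by omega
          have h3 : i ≠ j := fun h => hj h.symm
          simp [h1, h2, h3]
        · intro h; exact absurd (Finset.mem_univ i) h
      · -- i = m
        have hne : jm ≠ jm1 := by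
          simp [jm, jm1, Fin.ext_iff]
        rw [← Finset.sum_subset (Finset.subset_univ {jm, jm1})
          (by
            intro j _ hj
            simp only [Finset.mem_insert, Finset.mem_singleton] at hj
            push_neg at hj
            obtain ⟨hj1, hj2⟩ := hj
            have hjm' : (j : ℕ) ≠ m := fun h => hj1 (Fin.ext h)
            have hjm1' : (j : ℕ) ≠ m + 1 := fun h => hj2 (Fin.ext h)
            rw [hGm]
            have h4 : i ≠ j := by
              intro h; apply hjm'; rw [← h, hi]
            by_cases hjlt : (j : ℕ) < m
            · simp only [hi, hjm', and_false, if_false, hjm1']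
              have : ¬((i:ℕ) = m + 1) := by omega
              simp [this, h4]
            · have : ¬((j : ℕ) = m) := hjm'
              simp [hjlt, this, mul_zero])]
        rw [Finset.sum_pair hne]
        rw [hGm, hGm]
        have hjmv : (jm : ℕ) = m := rfl
        have hjm1v : (jm1 : ℕ) = m + 1 := rfl
        have hne1 : ¬(m + 1 = m) := by omega
        have hnotlt : ¬(m < m) := lt_irrefl m
        have hnotlt1 : ¬(m + 1 < m) := by omega
        have hilt : (i : ℕ) < m + 1 := by omega
        simp only [hi, hjmv, hjm1v, hne1, hnotlt, hnotlt1, hilt, and_true, and_false,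
          true_and, and_self, if_true, if_false, mul_zero, add_zero, if_pos rfl,
          if_neg hne1, if_neg hnotlt]
        have hsq : Real.sqrt (((n:ℝ) - m) / n) = Real.sqrt ((n:ℝ) - m) / Real.sqrt n := by
          rw [Real.sqrt_div (by rw [← ha]; linarith)]
        rw [hsq]
        rw [← ha]
        field_simp
        rw [if_pos (Nat.lt_succ_self m), mul_one_div_cancel (Real.sqrt_pos.mpr hn0).ne']
      · -- i > m
        rcases eq_or_lt_of_le (Nat.succ_le_of_lt hi) with hi1 | hi1
        · -- i = m + 1
          have hi1' : (i : ℕ) = m + 1 := hi1.symm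
          rw [Finset.sum_eq_single jm]
          · rw [hGm]
            have hjmv : (jm : ℕ) = m := rfl
            have h1 : ¬((i : ℕ) = m) := by omega
            have hnotlt : ¬(m < m) := lt_irrefl m
            have hnotlt1 : ¬((i : ℕ) < m + 1) := by omega
            have hne1 : ¬(m = m + 1) := by omega
            simp only [hjmv, h1, hi1', hnotlt, hnotlt1, hne1, false_and, and_true,
              and_false, true_and, and_self, if_true, if_false, if_pos rfl]
            have hnm : (2:ℝ) ≤ (n:ℝ) - m := ha ▸ ha2
            have hx : (0:ℝ) ≤ ((n:ℝ) - m - 1)/((n:ℝ) - m) :=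
              div_nonneg (by linarith) (by linarith)
            rw [if_neg (show ¬(m + 1 = m) by omega), if_neg (lt_irrefl (m + 1)),
              ← Real.sqrt_mul hx]
            congr 1
            have hcast : ((m + 1 : ℕ) : ℝ) = (m : ℝ) + 1 := by push_cast; ring
            rw [hcast]
            field_simp
            ring
          · intro j _ hj
            rw [hGm]
            have hjm' : (j : ℕ) ≠ m := fun h => hj (Fin.ext h)
            have h1 : ¬((i : ℕ) = m) := by omega
            by_cases hjm1' : (j : ℕ) = m + 1
            · have : ¬((j : ℕ) < m) := by omega
              have h2 : ¬((j : ℕ) = m) := hjm'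
              simp [hjm', this, h2, hjm1', mul_zero, h1]
            · have h4 : i ≠ j := by
                intro h; apply hjm1'; rw [← h, hi1']
              by_cases hjlt : (j : ℕ) < m
              · simp [h1, hjm', hjm1', h4]
              · simp [h1, hjm', hjm1', h4, hjlt]
          · intro h; exact absurd (Finset.mem_univ jm) h
        · -- i > m + 1
          have h1 : ¬((i : ℕ) = m) := by omega
          have h2 : ¬((i : ℕ) = m + 1) := by omega
          rw [Finset.sum_eq_zero]
          · have : ¬((i : ℕ) < m + 1) := by omega
            have h3 : ¬((i : ℕ) = m + 1) := h2
            simp [this, h3]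
          · intro j _
            rw [hGm]
            by_cases h4 : i = j
            · subst h4
              have hv1 : ¬((i : ℕ) < m) := by omega
              simp [h1, h2, hv1]
            · simp [h1, h2, h4]
  have hfin := key (n - 1) le_rfl
  rw [hfin]
  funext j
  by_cases hj : (j : ℕ) < n - 1
  · simp [hj]
  · have hje : (j : ℕ) = n - 1 := by omega
    simp only [hj, if_false, hje, if_pos rfl]
    have : ((n : ℝ) - (↑(n - 1) : ℝ)) = 1 := by
      have : ((n - 1 : ℕ) : ℝ) = (n : ℝ) - 1 := by
        push_cast [Nat.cast_sub (by omega : 1 ≤ n)]; ring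
      rw [this]; ring
    rw [this]
    simp only [lt_irrefl, if_false, if_true]
    rw [one_div ((n:ℝ)), Real.sqrt_inv, one_div]
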